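/- Suppose matrices C^{(1)}(x),...,C^{(r)}(x) with entries polynomial in x satisfy the integrability relations ∂_{x_i}C^{(j)} − ∂_{x_j}C^{(i)} = [C^{(j)}, C^{(i)}] for all i,j, and are nilpotent upper-triangular. Then there exists a unique matrix P with polynomial entries such that P|_{x=0} = Id and ∂_{x_i}P = −C^{(i)}(x)P for all i, and P is invertible with P^{-1} also having polynomial entries. -/

import Mathlib

open scoped BigOperators

noncomputable section

abbrev CoeffR (r : ℕ) := MvPolynomial (Fin r) ℂ

/-- Evaluation at `x = 0` of a matrix with polynomial entries. -/
def evalZero {μ r : ℕ} (P : Matrix (Fin μ) (Fin μ) (CoeffR r)) : Matrix (Fin μ) (Fin μ) ℂ :=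
  P.map (MvPolynomial.eval (fun _ => (0 : ℂ)))

/-- Entrywise partial derivative `∂_{x_i}` of a matrix with polynomial entries. -/
def dMat {μ r : ℕ} (i : Fin r) (P : Matrix (Fin μ) (Fin μ) (CoeffR r)) :
    Matrix (Fin μ) (Fin μ) (CoeffR r) :=
  P.map (fun p => MvPolynomial.pderiv i p)

open MvPolynomial in
lemma coeff_pderiv {r : ℕ} (i : Fin r) (p : MvPolynomial (Fin r) ℂ) (c : Fin r →₀ ℕ) :
    MvPolynomial.coeff c (MvPolynomial.pderiv i p)
      = ((c i : ℂ) + 1) * MvPolynomial.coeff (c + Finsupp.single i 1) p := by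
  induction p using MvPolynomial.induction_on' with
  | add p q hp hq => simp [hp, hq, mul_add]
  | monomial s a =>
    rw [pderiv_monomial]
    rw [coeff_monomial, coeff_monomial]
    by_cases h : s = c + Finsupp.single i 1
    · have h1 : s - Finsupp.single i 1 = c := by
        subst h; ext j; simp [Finsupp.tsub_apply]
      have h2 : s i = c i + 1 := by subst h; simp
      rw [h1, h2]; simp [h]; push_cast; ring
    · rw [if_neg h]
      by_cases h2 : s - Finsupp.single i 1 = c
      · rw [if_pos h2]
        have hsi : s i = 0 := by
          by_contra hsi
          apply h
          rw [← h2, tsub_add_cancel_of_le]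
          exact Finsupp.single_le_iff.mpr (Nat.one_le_iff_ne_zero.mpr hsi)
        simp [hsi]
      · simp [h2]

noncomputable section A
variable {r : ℕ}

lemma mem_supp_add_single (d : Fin r →₀ ℕ) (i : Fin r) :
    i ∈ (d + Finsupp.single i 1).support := by
  simp [Finsupp.mem_support_iff]

/-- Radial antiderivative candidate via minimal-index choice. -/
def antider (f : Fin r → MvPolynomial (Fin r) ℂ) : MvPolynomial (Fin r) ℂ :=
  ∑ i : Fin r, ∑ d ∈ (f i).support,
    if (d + Finsupp.single i 1).support.min' ⟨i, mem_supp_add_single d i⟩ = i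
    then MvPolynomial.monomial (d + Finsupp.single i 1)
      (MvPolynomial.coeff d (f i) / ((d i : ℂ) + 1))
    else 0

lemma antider_zero : antider (fun _ : Fin r => (0 : MvPolynomial (Fin r) ℂ)) = 0 := by
  simp [antider]

lemma constantCoeff_antider (f : Fin r → MvPolynomial (Fin r) ℂ) :
    MvPolynomial.constantCoeff (antider f) = 0 := by
  rw [antider]
  rw [map_sum]
  refine Finset.sum_eq_zero fun i _ => ?_
  rw [map_sum]
  refine Finset.sum_eq_zero fun d _ => ?_
  split
  · rw [MvPolynomial.constantCoeff_monomial]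
    rw [if_neg]
    intro h
    have := congrArg (fun g => g i) h
    simp at this
  · simp

lemma coeff_antider (f : Fin r → MvPolynomial (Fin r) ℂ) (d : Fin r →₀ ℕ) (i : Fin r)
    (h : (d + Finsupp.single i 1).support.min' ⟨i, mem_supp_add_single d i⟩ = i) :
    MvPolynomial.coeff (d + Finsupp.single i 1) (antider f)
      = MvPolynomial.coeff d (f i) / ((d i : ℂ) + 1) := by
  rw [antider]
  rw [MvPolynomial.coeff_sum]
  have key : ∀ i' : Fin r, ∀ d' ∈ (f i').support,
      MvPolynomial.coeff (d + Finsupp.single i 1)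
        (if (d' + Finsupp.single i' 1).support.min' ⟨i', mem_supp_add_single d' i'⟩ = i'
         then MvPolynomial.monomial (d' + Finsupp.single i' 1)
            (MvPolynomial.coeff d' (f i') / ((d' i' : ℂ) + 1))
         else 0)
      = if i' = i ∧ d' = d then MvPolynomial.coeff d' (f i') / ((d' i' : ℂ) + 1) else 0 := by
    intro i' d' _
    by_cases hsum : d' + Finsupp.single i' 1 = d + Finsupp.single i 1
    · have hmin : (d' + Finsupp.single i' 1).support.min' ⟨i', mem_supp_add_single d' i'⟩ = i := by
        simp only [hsum]; exact h
      by_cases hii : i' = i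
      · subst hii
        have hd : d' = d := by
          exact add_right_cancel hsum
        subst hd
        rw [if_pos hmin, MvPolynomial.coeff_monomial, if_pos hsum, if_pos ⟨rfl, rfl⟩]
      · rw [if_neg (show ¬ _ = i' from fun hc => hii (by rw [← hc]; exact hmin))]
        · rw [if_neg (fun hc => hii hc.1)]
          simp
    · have hcond : ¬ (i' = i ∧ d' = d) := by
        rintro ⟨rfl, rfl⟩; exact hsum rfl
      rw [if_neg hcond]
      split
      · rw [MvPolynomial.coeff_monomial, if_neg hsum]
      · simp
  calc (∑ i' : Fin r, MvPolynomial.coeff (d + Finsupp.single i 1) (∑ d' ∈ (f i').support, _))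
      = ∑ i' : Fin r, ∑ d' ∈ (f i').support,
          (if i' = i ∧ d' = d then MvPolynomial.coeff d' (f i') / ((d' i' : ℂ) + 1) else 0) := by
        refine Finset.sum_congr rfl fun i' _ => ?_
        rw [MvPolynomial.coeff_sum]
        exact Finset.sum_congr rfl (key i')
    _ = MvPolynomial.coeff d (f i) / ((d i : ℂ) + 1) := by
        rw [Finset.sum_eq_single i]
        · simp only [true_and, if_pos rfl]
          rw [Finset.sum_ite_eq' (f i).support d (fun d' => MvPolynomial.coeff d' (f i) / ((d' i : ℂ) + 1))]
          split
          · rfl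
          · rw [MvPolynomial.notMem_support_iff.mp (by assumption)]
            simp
        · intro i' _ hi'
          exact Finset.sum_eq_zero fun d' _ => if_neg (fun hc => hi' hc.1)
        · intro hi; exact absurd (Finset.mem_univ i) hi

end A

lemma pderiv_antider {r : ℕ} (f : Fin r → MvPolynomial (Fin r) ℂ)
    (hf : ∀ i j, MvPolynomial.pderiv j (f i) = MvPolynomial.pderiv i (f j)) (j : Fin r) :
    MvPolynomial.pderiv j (antider f) = f j := by
  apply MvPolynomial.ext
  intro c
  rw [coeff_pderiv]
  by_cases hij : (c + Finsupp.single j 1).support.min' ⟨j, mem_supp_add_single c j⟩ = j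
  · rw [coeff_antider f c j hij]
    have h0 : ((c j : ℂ) + 1) ≠ 0 := Nat.cast_add_one_ne_zero _
    field_simp
  · set i₀ := (c + Finsupp.single j 1).support.min' ⟨j, mem_supp_add_single c j⟩ with hi₀
    have hi₀mem : i₀ ∈ (c + Finsupp.single j 1).support := Finset.min'_mem _ _
    have hci₀ : c i₀ ≠ 0 := by
      rw [Finsupp.mem_support_iff] at hi₀mem
      simpa [Finsupp.single_apply, Ne.symm hij] using hi₀mem
    set d := c - Finsupp.single i₀ 1 with hdd
    have hd : d + Finsupp.single i₀ 1 = c :=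
      tsub_add_cancel_of_le (Finsupp.single_le_iff.mpr (Nat.one_le_iff_ne_zero.mpr hci₀))
    set e := d + Finsupp.single j 1 with hee
    have hes : e + Finsupp.single i₀ 1 = c + Finsupp.single j 1 := by
      rw [hee, add_right_comm, hd]
    have hmin : (e + Finsupp.single i₀ 1).support.min' ⟨i₀, mem_supp_add_single e i₀⟩ = i₀ := by
      simp only [hes]; exact hi₀.symm
    rw [show c + Finsupp.single j 1 = e + Finsupp.single i₀ 1 from hes.symm,
      coeff_antider f e i₀ hmin]
    have hdj : d j = c j := by
      rw [hdd, Finsupp.tsub_apply, Finsupp.single_apply, if_neg hij]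
      rfl
    have hdi₀ : (d i₀ : ℂ) + 1 = (c i₀ : ℂ) := by
      rw [hdd, Finsupp.tsub_apply, Finsupp.single_apply, if_pos rfl]
      have h1 := Nat.one_le_iff_ne_zero.mpr hci₀
      rw [Nat.cast_sub h1]
      push_cast
      ring
    have hei₀ : (e i₀ : ℂ) + 1 = (c i₀ : ℂ) := by
      rw [hee, Finsupp.add_apply, Finsupp.single_apply, if_neg (fun hc => hij hc.symm)]
      simpa using hdi₀
    have hkey : ((d j : ℂ) + 1) * MvPolynomial.coeff (d + Finsupp.single j 1) (f i₀)
        = ((d i₀ : ℂ) + 1) * MvPolynomial.coeff (d + Finsupp.single i₀ 1) (f j) := by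
      rw [← coeff_pderiv, ← coeff_pderiv, hf i₀ j]
    rw [← hee, hd] at hkey
    rw [hdj, hdi₀] at hkey
    have hc0 : ((c i₀ : ℂ)) ≠ 0 := Nat.cast_ne_zero.mpr hci₀
    rw [hei₀]
    field_simp
    linear_combination hkey

lemma eq_zero_of_pderiv {r : ℕ} (p : MvPolynomial (Fin r) ℂ)
    (hp : ∀ i, MvPolynomial.pderiv i p = 0) (h0 : MvPolynomial.constantCoeff p = 0) :
    p = 0 := by
  apply MvPolynomial.ext
  intro c
  by_cases hc : c = 0
  · subst hc; exact h0
  · obtain ⟨i, hi⟩ : ∃ i, c i ≠ 0 := by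
      by_contra hall
      push_neg at hall
      exact hc (Finsupp.ext fun i => hall i)
    have hd : (c - Finsupp.single i 1) + Finsupp.single i 1 = c :=
      tsub_add_cancel_of_le (Finsupp.single_le_iff.mpr (Nat.one_le_iff_ne_zero.mpr hi))
    have := coeff_pderiv i p (c - Finsupp.single i 1)
    rw [hp i, hd] at this
    have hne : ((((c - Finsupp.single i 1) : Fin r →₀ ℕ) i : ℂ) + 1) ≠ 0 := Nat.cast_add_one_ne_zero _
    simp only [MvPolynomial.coeff_zero] at this
    have := (mul_eq_zero.mp this.symm).resolve_left hne
    simpa using this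


noncomputable def Prow {μ r : ℕ} (C : Fin r → Matrix (Fin μ) (Fin μ) (CoeffR r)) (k l : Fin μ) :
    CoeffR r :=
  (if k = l then 1 else 0) +
    antider (fun i => -(∑ m : Fin μ, if _ : k < m then C i k m * Prow C m l else 0))
termination_by μ - k.val
decreasing_by
  rename_i h
  have h1 := m.isLt
  have h2 : k.val < m.val := h
  omega

section Mats
variable {μ r : ℕ} (C : Fin r → Matrix (Fin μ) (Fin μ) (CoeffR r))

lemma hfull (htri : ∀ (i : Fin r) (k l : Fin μ), l ≤ k → C i k l = 0)
    (i : Fin r) (k : Fin μ) (g : Fin μ → CoeffR r) :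
    (∑ m : Fin μ, if _ : k < m then C i k m * g m else 0) = ∑ m : Fin μ, C i k m * g m := by
  refine Finset.sum_congr rfl fun m _ => ?_
  split
  · rfl
  · rw [htri i k m (not_lt.mp (by assumption)), zero_mul]

lemma Prow_tri : ∀ (n : ℕ) (k l : Fin μ), μ - k.val ≤ n → l ≤ k →
    Prow C k l = if k = l then 1 else 0 := by
  intro n
  induction n with
  | zero => intro k l h _; have := k.isLt; omega
  | succ n ih =>
    intro k l hn hle
    rw [Prow]
    have hz : (fun i => -(∑ m : Fin μ, if _ : k < m then C i k m * Prow C m l else 0))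
        = fun _ : Fin r => (0 : CoeffR r) := by
      funext i
      rw [neg_eq_zero]
      refine Finset.sum_eq_zero fun m _ => ?_
      split
      · rename_i h
        have hlt : l < m := lt_of_le_of_lt hle h
        rw [ih m l (by have := m.isLt; have : k.val < m.val := h; omega) (le_of_lt hlt)]
        rw [if_neg (by exact fun hc => absurd hc (ne_of_gt hlt)), mul_zero]
      · rfl
    rw [hz, antider_zero, add_zero]

lemma Prow_constantCoeff (k l : Fin μ) :
    MvPolynomial.constantCoeff (Prow C k l) = if k = l then 1 else 0 := by
  rw [Prow, map_add, constantCoeff_antider, add_zero]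
  split <;> simp

lemma Prow_deriv (hint : ∀ i j : Fin r,
      (C j).map (fun p => MvPolynomial.pderiv i p) - (C i).map (fun p => MvPolynomial.pderiv j p)
        = C j * C i - C i * C j)
    (htri : ∀ (i : Fin r) (k l : Fin μ), l ≤ k → C i k l = 0) :
    ∀ (n : ℕ) (k : Fin μ), μ - k.val ≤ n → ∀ (l : Fin μ) (i : Fin r),
      MvPolynomial.pderiv i (Prow C k l) = -(∑ m : Fin μ, C i k m * Prow C m l) := by
  intro n
  induction n with
  | zero => intro k h; have := k.isLt; omega
  | succ n ih =>
    intro k hn l i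
    have hterm : ∀ (i' j : Fin r) (m : Fin μ),
        C i' k m * MvPolynomial.pderiv j (Prow C m l)
          = C i' k m * (-(∑ p : Fin μ, C j m p * Prow C p l)) := by
      intro i' j m
      by_cases h : k < m
      · rw [ih m (by have := m.isLt; have : k.val < m.val := h; omega) l j]
      · rw [htri i' k m (not_lt.mp h), zero_mul, zero_mul]
    have hce : ∀ (a b : Fin r) (m : Fin μ),
        MvPolynomial.pderiv a ((C b) k m) - MvPolynomial.pderiv b ((C a) k m)
          = ∑ p : Fin μ, (C b k p * C a p m - C a k p * C b p m) := by
      intro a b m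
      have h := congrFun (congrFun (hint a b) k) m
      simpa [Matrix.sub_apply, Matrix.mul_apply, Matrix.map_apply, Finset.sum_sub_distrib]
        using h
    have swap : ∀ X Y : Matrix (Fin μ) (Fin μ) (CoeffR r),
        ∑ m : Fin μ, X k m * (∑ p : Fin μ, Y m p * Prow C p l)
          = ∑ m : Fin μ, Prow C m l * (∑ p : Fin μ, X k p * Y p m) := by
      intro X Y
      simp only [Finset.mul_sum]
      rw [Finset.sum_comm]
      exact Finset.sum_congr rfl fun m _ => Finset.sum_congr rfl fun p _ => by ring
    conv_lhs => rw [Prow]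
    rw [map_add]
    have h1 : MvPolynomial.pderiv i (if k = l then (1:CoeffR r) else 0) = 0 := by
      split <;> simp
    rw [h1, zero_add]
    rw [pderiv_antider _ ?_ i]
    · rw [hfull C htri i k]
    · -- closedness
      intro a b
      simp only [hfull C htri]
      simp only [map_neg, map_sum, MvPolynomial.pderiv_mul]
      simp only [hterm]
      rw [neg_inj]
      simp only [mul_neg, Finset.sum_add_distrib]
      rw [Finset.sum_neg_distrib, Finset.sum_neg_distrib, swap (C a) (C b), swap (C b) (C a)]
      rw [← sub_eq_add_neg, ← sub_eq_add_neg, ← Finset.sum_sub_distrib, ← Finset.sum_sub_distrib]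
      refine Finset.sum_congr rfl fun m _ => ?_
      have h := hce a b m
      have hsplit : ∑ p : Fin μ, (C b k p * C a p m - C a k p * C b p m)
          = (∑ p : Fin μ, C b k p * C a p m) - ∑ p : Fin μ, C a k p * C b p m :=
        Finset.sum_sub_distrib _ _
      linear_combination (-(Prow C m l)) * h - (Prow C m l) * hsplit
end Mats


/-- if the matrices `C^{(i)}(x)`, with entries in `ℂ[x₁,…,x_r]`, satisfy
the zero-curvature relations `∂_{x_i}C^{(j)} − ∂_{x_j}C^{(i)} = [C^{(j)}, C^{(i)}]` and are
nilpotent (strictly) upper-triangular, then there exists a unique matrix `P` with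
polynomial entries such that `P|_{x=0} = Id` and `∂_{x_i}P = −C^{(i)}(x)P` for all `i`;
moreover `P` is invertible with `P⁻¹` also having polynomial entries. -/
theorem flat_gauge_exists_unique {μ r : ℕ}
    (C : Fin r → Matrix (Fin μ) (Fin μ) (CoeffR r))
    (hint : ∀ i j : Fin r, dMat i (C j) - dMat j (C i) = C j * C i - C i * C j)
    (htri : ∀ (i : Fin r) (k l : Fin μ), l ≤ k → C i k l = 0) :
    ∃ P : Matrix (Fin μ) (Fin μ) (CoeffR r),
      (evalZero P = 1 ∧ ∀ i : Fin r, dMat i P = -(C i * P)) ∧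
      IsUnit P ∧
      ∀ Q : Matrix (Fin μ) (Fin μ) (CoeffR r),
        (evalZero Q = 1 ∧ ∀ i : Fin r, dMat i Q = -(C i * Q)) → Q = P := by
  refine ⟨Matrix.of (fun k l => Prow C k l), ⟨?_, ?_⟩, ?_, ?_⟩
  · apply Matrix.ext
    intro k l
    simp only [evalZero, Matrix.map_apply, Matrix.of_apply, Matrix.one_apply]
    rw [MvPolynomial.eval_zero', Prow_constantCoeff]
  · intro i
    apply Matrix.ext
    intro k l
    simp only [dMat, Matrix.map_apply, Matrix.of_apply, Matrix.neg_apply, Matrix.mul_apply]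
    rw [Prow_deriv C hint htri μ k (Nat.sub_le _ _) l i]
  · apply (Matrix.isUnit_iff_isUnit_det _).mpr
    have htriP : Matrix.BlockTriangular (Matrix.of fun k l => Prow C k l) id := by
      intro a b hb
      rw [Matrix.of_apply, Prow_tri C μ a b (Nat.sub_le _ _) (le_of_lt hb)]
      exact if_neg (show a ≠ b from fun hc => absurd hb (by rw [hc]; exact lt_irrefl _))
    rw [Matrix.det_of_upperTriangular htriP]
    have hdiag : ∀ k : Fin μ, (Matrix.of fun k l => Prow C k l) k k = 1 := fun k => by
      rw [Matrix.of_apply, Prow_tri C μ k k (Nat.sub_le _ _) le_rfl, if_pos rfl]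
    rw [Finset.prod_congr rfl (fun k _ => hdiag k), Finset.prod_const_one]
    exact isUnit_one
  · rintro Q ⟨hQ0, hQd⟩
    have key : ∀ (n : ℕ) (k : Fin μ), μ - k.val ≤ n → ∀ l, Q k l = Prow C k l := by
      intro n
      induction n with
      | zero => intro k h; have := k.isLt; omega
      | succ n ih =>
        intro k hn l
        have hD : Q k l - Prow C k l = 0 := by
          apply eq_zero_of_pderiv
          · intro i
            rw [map_sub]
            have h1 : MvPolynomial.pderiv i (Q k l) = -(∑ m : Fin μ, C i k m * Q m l) := by
              have h2 := congrFun (congrFun (hQd i) k) l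
              simpa [dMat, Matrix.map_apply, Matrix.neg_apply, Matrix.mul_apply] using h2
            rw [h1, Prow_deriv C hint htri μ k (Nat.sub_le _ _) l i]
            have h3 : ∑ m : Fin μ, C i k m * Q m l = ∑ m : Fin μ, C i k m * Prow C m l :=
              Finset.sum_congr rfl fun m _ => by
                by_cases h : k < m
                · rw [ih m (by have := m.isLt; have : k.val < m.val := h; omega) l]
                · rw [htri i k m (not_lt.mp h), zero_mul, zero_mul]
            rw [h3]
            ring
          · rw [map_sub, Prow_constantCoeff]
            have h4 := congrFun (congrFun hQ0 k) l
            simp only [evalZero, Matrix.map_apply, Matrix.one_apply] at h4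
            rw [← MvPolynomial.eval_zero', h4]
            ring
        exact sub_eq_zero.mp hD
    apply Matrix.ext
    intro k l
    exact key μ k (Nat.sub_le _ _) l

end
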